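/- Let Γ be a finite group whose Sylow p-subgroups are cyclic for all primes p ≠ 3, and whose Sylow 3-subgroup P₃ is isomorphic to either Z/3 × Z/3 or Z/9 ⋊ Z/3. Suppose Γ = P₃ N for some normal subgroup N with P₃ ∩ N = {1}. Then Γ has a subgroup of index 3 all of whose Sylow subgroups are cyclic. -/
import Mathlib

open Subgroup Pointwise

section Aux

variable {G : Type*} [Group G]

/-- card of a semidirect product -/
lemma sd_card {N H : Type*} [Group N] [Group H] (φ : H →* MulAut N) :
    Nat.card (N ⋊[φ] H) = Nat.card N * Nat.card H := by
  rw [← Nat.card_prod]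
  exact Nat.card_congr ⟨fun x => (x.left, x.right), fun p => ⟨p.1, p.2⟩,
    fun x => rfl, fun p => rfl⟩

lemma card_mult (α : Type*) : Nat.card (Multiplicative α) = Nat.card α :=
  Nat.card_congr Multiplicative.toAdd

/-- a cyclic subgroup of index 3 in P₃ -/
lemma exists_cyclic_sub (Γ : Type) [Group Γ] [Fintype Γ] (P₃ : Sylow 3 Γ)
    (hP₃ : Nonempty (P₃ ≃* Multiplicative (ZMod 3) × Multiplicative (ZMod 3)) ∨
      ∃ φ : Multiplicative (ZMod 3) →* MulAut (Multiplicative (ZMod 9)), φ ≠ 1 ∧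
        Nonempty (P₃ ≃* Multiplicative (ZMod 9) ⋊[φ] Multiplicative (ZMod 3))) :
    ∃ Q : Subgroup Γ, Q ≤ (P₃ : Subgroup Γ) ∧ IsCyclic Q ∧
      3 * Nat.card Q = Nat.card (P₃ : Subgroup Γ) := by
  haveI : Fact (Nat.Prime 3) := ⟨by norm_num⟩
  rcases hP₃ with h | ⟨φ, -, h⟩ <;> obtain ⟨e⟩ := h
  · -- case Z/3 × Z/3
    have hcard : Nat.card (P₃ : Subgroup Γ) = 9 := by
      rw [Nat.card_congr e.toEquiv]
      simp [Nat.card_prod, card_mult, Nat.card_zmod]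
    obtain ⟨H, hH⟩ := Sylow.exists_subgroup_card_pow_prime (G := (P₃ : Subgroup Γ)) 3
      (n := 1) (by rw [hcard]; norm_num)
    refine ⟨H.map (P₃ : Subgroup Γ).subtype, map_subtype_le H, ?_, ?_⟩
    · have e' := H.equivMapOfInjective (P₃ : Subgroup Γ).subtype
        (P₃ : Subgroup Γ).subtype_injective
      haveI : IsCyclic H := isCyclic_of_prime_card (p := 3) (by simpa using hH)
      exact isCyclic_of_surjective e'.toMonoidHom e'.surjective
    · have : Nat.card (H.map (P₃ : Subgroup Γ).subtype) = Nat.card H :=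
        (Nat.card_congr (H.equivMapOfInjective (P₃ : Subgroup Γ).subtype
          (P₃ : Subgroup Γ).subtype_injective).toEquiv).symm
      rw [this, hH, hcard]; norm_num
  · -- case Z/9 ⋊ Z/3
    have hcard : Nat.card (P₃ : Subgroup Γ) = 27 := by
      rw [Nat.card_congr e.toEquiv, sd_card]
      simp [card_mult, Nat.card_zmod]
    set R : Subgroup (Multiplicative (ZMod 9) ⋊[φ] Multiplicative (ZMod 3)) :=
      (SemidirectProduct.inl (φ := φ)).range with hR
    have eR : Multiplicative (ZMod 9) ≃* R :=
      MonoidHom.ofInjective SemidirectProduct.inl_injective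
    set H : Subgroup (P₃ : Subgroup Γ) := R.map e.symm.toMonoidHom with hH
    have eH : R ≃* H := e.symm.subgroupMap R
    have hHcard : Nat.card H = 9 := by
      rw [← Nat.card_congr eH.toEquiv, ← Nat.card_congr eR.toEquiv]
      simp [card_mult, Nat.card_zmod]
    haveI : IsCyclic H := by
      have := isCyclic_of_surjective (eR.trans eH).toMonoidHom (eR.trans eH).surjective
      exact this
    refine ⟨H.map (P₃ : Subgroup Γ).subtype, map_subtype_le H, ?_, ?_⟩
    · have e' := H.equivMapOfInjective (P₃ : Subgroup Γ).subtype
        (P₃ : Subgroup Γ).subtype_injective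
      exact isCyclic_of_surjective e'.toMonoidHom e'.surjective
    · have : Nat.card (H.map (P₃ : Subgroup Γ).subtype) = Nat.card H :=
        (Nat.card_congr (H.equivMapOfInjective (P₃ : Subgroup Γ).subtype
          (P₃ : Subgroup Γ).subtype_injective).toEquiv).symm
      rw [this, hHcard, hcard]

end Aux

theorem index_three_subgroup_with_all_sylow_cyclic
    (Γ : Type) [Group Γ] [Fintype Γ] (hodd : Odd (Fintype.card Γ))
    (hsyl : ∀ p : ℕ, p.Prime → p ≠ 3 → ∀ P : Sylow p Γ, IsCyclic P)
    (P₃ : Sylow 3 Γ)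
    (hP₃ : Nonempty (P₃ ≃* Multiplicative (ZMod 3) × Multiplicative (ZMod 3)) ∨
      ∃ φ : Multiplicative (ZMod 3) →* MulAut (Multiplicative (ZMod 9)), φ ≠ 1 ∧
        Nonempty (P₃ ≃* Multiplicative (ZMod 9) ⋊[φ] Multiplicative (ZMod 3)))
    (N : Subgroup Γ) (hN : N.Normal)
    (hsup : (P₃ : Subgroup Γ) ⊔ N = ⊤) (hinf : (P₃ : Subgroup Γ) ⊓ N = ⊥) :
    ∃ K : Subgroup Γ, K.index = 3 ∧
      ∀ p : ℕ, p.Prime → ∀ Q : Sylow p K, IsCyclic Q := by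
  classical
  haveI : Fact (Nat.Prime 3) := ⟨by norm_num⟩
  obtain ⟨Q, hQP, hQcyc, hQcard⟩ := exists_cyclic_sub Γ P₃ hP₃
  -- complement
  have hcomp : IsComplement' (P₃ : Subgroup Γ) N := by
    apply isComplement'_of_disjoint_and_mul_eq_univ (disjoint_iff.mpr hinf)
    rw [← Subgroup.mul_normal, hsup, Subgroup.coe_top]
  have hcardΓ : Nat.card (P₃ : Subgroup Γ) * Nat.card N = Nat.card Γ := hcomp.card_mul
  set K : Subgroup Γ := Q ⊔ N with hK
  have hQK : Q ≤ K := le_sup_left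
  have hNK : N ≤ K := le_sup_right
  have hdisj : Q ⊓ N = ⊥ := by
    rw [eq_bot_iff, ← hinf]
    exact inf_le_inf_right N hQP
  -- complement inside K
  have hcompK : IsComplement' (Q.subgroupOf K) (N.subgroupOf K) := by
    apply isComplement'_of_disjoint_and_mul_eq_univ
    · rw [disjoint_iff, subgroupOf, subgroupOf, ← comap_inf, hdisj,
        ← Subgroup.bot_subgroupOf (H := K)]
      rfl
    · apply Set.eq_univ_iff_forall.mpr
      intro k
      have hk : (k : Γ) ∈ ((Q : Set Γ) * (N : Set Γ)) := by
        rw [← Subgroup.mul_normal, ← hK]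
        exact k.2
      obtain ⟨q, hq, n, hn, hqn⟩ := hk
      refine ⟨⟨q, hQK hq⟩, ?_, ⟨n, hNK hn⟩, ?_, ?_⟩
      · simpa [Subgroup.mem_subgroupOf] using hq
      · simpa [Subgroup.mem_subgroupOf] using hn
      · exact Subtype.ext hqn
  have hcardQ' : Nat.card (Q.subgroupOf K) = Nat.card Q :=
    Nat.card_congr (subgroupOfEquivOfLe hQK).toEquiv
  have hcardN' : Nat.card (N.subgroupOf K) = Nat.card N :=
    Nat.card_congr (subgroupOfEquivOfLe hNK).toEquiv
  have hcardK : Nat.card K = Nat.card Q * Nat.card N := by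
    rw [← hcompK.card_mul, hcardQ', hcardN']
  have hΓ3 : Nat.card Γ = 3 * Nat.card K := by
    rw [hcardK, ← hcardΓ, ← hQcard, mul_assoc]
  have hKpos : 0 < Nat.card K := Nat.card_pos
  have hindex : K.index = 3 := by
    have := K.index_mul_card
    rw [hΓ3] at this
    exact Nat.eq_of_mul_eq_mul_right hKpos this
  refine ⟨K, hindex, ?_⟩
  -- 3 does not divide card N
  have hN3 : ¬ (3 ∣ Nat.card N) := by
    intro hdvd
    have hv := P₃.card_eq_multiplicity
    set v := (Nat.card Γ).factorization 3 with hvdef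
    have h1 : 3 ^ v * Nat.card N = Nat.card Γ := by rw [← hv]; exact hcardΓ
    have h2 : 3 ^ (v + 1) ∣ Nat.card Γ := by
      rw [← h1, pow_succ]
      exact mul_dvd_mul_left _ hdvd
    exact Nat.pow_succ_factorization_not_dvd Nat.card_pos.ne' (by norm_num) h2
  -- card Q is a power of 3
  have hQpg : IsPGroup 3 Q := P₃.isPGroup'.to_le hQP
  obtain ⟨k, hk⟩ := IsPGroup.iff_card.mp hQpg
  -- factorization of card K at 3 is k
  have hfact : (Nat.card K).factorization 3 = k := by
    rw [hcardK, hk, Nat.factorization_mul (by positivity) Nat.card_pos.ne',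
      Finsupp.add_apply, Nat.Prime.factorization_pow (by norm_num),
      Finsupp.single_eq_same, Nat.factorization_eq_zero_of_not_dvd hN3, add_zero]
  -- the Sylow 3-subgroup built from Q
  have hScard : Nat.card (Q.subgroupOf K) = 3 ^ (Nat.card K).factorization 3 := by
    rw [hcardQ', hk, hfact]
  let S : Sylow 3 K := Sylow.ofCard (Q.subgroupOf K) hScard
  haveI hScyc : IsCyclic (S : Subgroup K) := by
    show IsCyclic (Q.subgroupOf K)
    have e' := (subgroupOfEquivOfLe hQK).symm
    exact isCyclic_of_surjective e'.toMonoidHom e'.surjective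
  intro p hp R
  haveI : Fact p.Prime := ⟨hp⟩
  by_cases hp3 : p = 3
  · subst hp3
    have e' := Sylow.equiv S R
    exact isCyclic_of_surjective e'.toMonoidHom e'.surjective
  · -- p ≠ 3 : embed into a Sylow p of Γ
    have hmap : IsPGroup p ((R : Subgroup K).map K.subtype) := R.isPGroup'.map K.subtype
    obtain ⟨T, hT⟩ := hmap.exists_le_sylow
    haveI : IsCyclic (T : Subgroup Γ) := hsyl p hp hp3 T
    haveI : IsCyclic ((R : Subgroup K).map K.subtype) := Subgroup.isCyclic_of_le hT
    have e' := ((R : Subgroup K).equivMapOfInjective K.subtype K.subtype_injective).symm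
    exact isCyclic_of_surjective e'.toMonoidHom e'.surjective
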